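/- arXiv:1803.10532 — 5 statements merged into one kernel-verified Lean document; each statement's English description precedes it below -/
import Mathlib

section
/- In a Boolean inverse semigroup, for elements with u, v ≤ s appropriately (u ∨ v ≤ s, with both u,v ≤ s), one has s∖(u ∨ v) = (s∖u)·s⁻¹·(s∖v). -/
/-- An inverse semigroup: every element has a unique (generalized) inverse. -/
class InverseSemigroup (S : Type*) extends Semigroup S, Inv S where
  mul_inv_mul : ∀ s : S, s * s⁻¹ * s = s
  inv_mul_inv : ∀ s : S, s⁻¹ * s * s⁻¹ = s⁻¹
  inv_unique : ∀ s t : S, s * t * s = s → t * s * t = t → t = s⁻¹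

/-- An inverse semigroup with a zero element. -/
class InverseSemigroupWithZero (S : Type*) extends InverseSemigroup S, Zero S where
  zero_mul : ∀ s : S, 0 * s = 0
  mul_zero : ∀ s : S, s * 0 = 0

section Defs
variable {S : Type*}

/-- The natural partial order on an inverse semigroup: `a ≤ b` iff `a = b (a⁻¹ a)`. -/
def nle [InverseSemigroup S] (a b : S) : Prop := a = b * (a⁻¹ * a)

/-- Compatibility: `a⁻¹ b` and `a b⁻¹` are both idempotent. -/
def compat [InverseSemigroup S] (a b : S) : Prop :=
  IsIdempotentElem (a⁻¹ * b) ∧ IsIdempotentElem (a * b⁻¹)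

/-- Orthogonality: `a⁻¹ b = 0 = a b⁻¹`. -/
def orth [InverseSemigroupWithZero S] (a b : S) : Prop := a⁻¹ * b = 0 ∧ a * b⁻¹ = 0

/-- `u` is the least upper bound (join) of `a` and `b` in the natural partial order. -/
def isJoin [InverseSemigroup S] (u a b : S) : Prop :=
  nle a u ∧ nle b u ∧ ∀ c, nle a c → nle b c → nle u c

/-- `m` is the greatest lower bound (meet) of `a` and `b` in the natural partial order. -/
def isMeet [InverseSemigroup S] (m a b : S) : Prop :=
  nle m a ∧ nle m b ∧ ∀ c, nle c a → nle c b → nle c m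

/-- `c = a ∖ b`: `c ≤ a`, `c ⊥ b` and `a = b ∨ c`. -/
def isDiff [InverseSemigroupWithZero S] (c a b : S) : Prop :=
  nle c a ∧ orth c b ∧ isJoin a b c

end Defs

/-- A distributive inverse semigroup: compatible pairs have joins, and
multiplication distributes over such joins. -/
class DistributiveInverseSemigroup (S : Type*) extends InverseSemigroupWithZero S where
  join_exists : ∀ a b : S, compat a b → ∃ u, isJoin u a b
  mul_join_left : ∀ a b u c : S, isJoin u a b → isJoin (c * u) (c * a) (c * b)
  mul_join_right : ∀ a b u c : S, isJoin u a b → isJoin (u * c) (a * c) (b * c)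

/-- A Boolean inverse semigroup: a distributive inverse semigroup whose idempotents
form a (generalized) Boolean algebra, i.e. relative complements of idempotents exist. -/
class BooleanInverseSemigroup (S : Type*) extends DistributiveInverseSemigroup S where
  relcomp : ∀ e f : S, IsIdempotentElem e → IsIdempotentElem f → nle f e →
    ∃ c, IsIdempotentElem c ∧ isDiff c e f

section AuxIS
variable {S : Type*} [InverseSemigroup S]

theorem aux_mis (s : S) : s * s⁻¹ * s = s := InverseSemigroup.mul_inv_mul s
theorem aux_imi (s : S) : s⁻¹ * s * s⁻¹ = s⁻¹ := InverseSemigroup.inv_mul_inv s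
theorem aux_inv_inv (s : S) : s⁻¹⁻¹ = s :=
  (InverseSemigroup.inv_unique s⁻¹ s (aux_imi s) (aux_mis s)).symm
theorem aux_idem_inv {e : S} (he : IsIdempotentElem e) : e⁻¹ = e :=
  (InverseSemigroup.inv_unique e e (by rw [he, he]) (by rw [he, he])).symm
theorem aux_dd_idem (s : S) : IsIdempotentElem (s⁻¹ * s) := by
  show s⁻¹ * s * (s⁻¹ * s) = s⁻¹ * s
  rw [← mul_assoc, aux_imi]
theorem aux_rr_idem (s : S) : IsIdempotentElem (s * s⁻¹) := by
  show s * s⁻¹ * (s * s⁻¹) = s * s⁻¹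
  rw [← mul_assoc, aux_mis]
theorem idemk {e : S} (he : IsIdempotentElem e) (x : S) : e * (e * x) = e * x := by
  rw [← mul_assoc, he]
theorem mis' (s : S) : s * (s⁻¹ * s) = s := by rw [← mul_assoc, aux_mis]
theorem imi' (s : S) : s⁻¹ * (s * s⁻¹) = s⁻¹ := by rw [← mul_assoc, aux_imi]
theorem misk (s y : S) : s * (s⁻¹ * (s * y)) = s * y := by
  rw [← mul_assoc, ← mul_assoc, aux_mis]
theorem imik (s y : S) : s⁻¹ * (s * (s⁻¹ * y)) = s⁻¹ * y := by
  rw [← mul_assoc, ← mul_assoc, aux_imi]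

theorem aux_idem_mul {e f : S} (he : IsIdempotentElem e) (hf : IsIdempotentElem f) :
    IsIdempotentElem (e * f) := by
  have hA : (e * f) * (f * (e * f)⁻¹ * e) * (e * f) = e * f := by
    have h3 := aux_mis (e * f)
    simp only [mul_assoc] at h3 ⊢
    rw [idemk hf, idemk he]
    exact h3
  have hB : (f * (e * f)⁻¹ * e) * (e * f) * (f * (e * f)⁻¹ * e) = f * (e * f)⁻¹ * e := by
    have h3 := aux_imi (e * f)
    simp only [mul_assoc] at h3 ⊢
    rw [idemk he, idemk hf]
    have h4 := congrArg (· * e) h3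
    simp only [mul_assoc] at h4
    rw [h4]
  have hx2 : f * (e * f)⁻¹ * e = (e * f)⁻¹ := InverseSemigroup.inv_unique (e * f) _ hA hB
  have hxx : IsIdempotentElem ((e * f)⁻¹) := by
    show (e * f)⁻¹ * (e * f)⁻¹ = (e * f)⁻¹
    conv_lhs => rw [← hx2]
    have h3 := aux_imi (e * f)
    have h4 := congrArg (· * e) h3
    simp only [mul_assoc] at h4 ⊢
    rw [h4]
    have h5 := hx2
    simp only [mul_assoc] at h5
    exact h5
  have hef : e * f = (e * f)⁻¹ := (aux_inv_inv (e * f)).symm.trans (aux_idem_inv hxx)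
  show (e * f) * (e * f) = e * f
  rw [hef]
  exact hxx

theorem aux_idem_comm {e f : S} (he : IsIdempotentElem e) (hf : IsIdempotentElem f) :
    e * f = f * e := by
  have hef : (e * f) * (e * f) = e * f := aux_idem_mul he hf
  have hfe : (f * e) * (f * e) = f * e := aux_idem_mul hf he
  have h1 : (e * f) * (f * e) * (e * f) = e * f := by
    simp only [mul_assoc] at hef ⊢
    rw [idemk hf, idemk he]
    exact hef
  have h2 : (f * e) * (e * f) * (f * e) = f * e := by
    simp only [mul_assoc] at hfe ⊢
    rw [idemk he, idemk hf]
    exact hfe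
  have h3 : f * e = (e * f)⁻¹ := InverseSemigroup.inv_unique _ _ h1 h2
  have h4 : (e * f)⁻¹ = e * f := aux_idem_inv (aux_idem_mul he hf)
  rw [h3, h4]

theorem aux_mul_inv_rev (a b : S) : (a * b)⁻¹ = b⁻¹ * a⁻¹ := by
  have hc : b * b⁻¹ * (a⁻¹ * a) = a⁻¹ * a * (b * b⁻¹) :=
    aux_idem_comm (aux_rr_idem b) (aux_dd_idem a)
  refine (InverseSemigroup.inv_unique (a * b) (b⁻¹ * a⁻¹) ?_ ?_).symm
  · have h := congrArg (fun z => a * (z * b)) hc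
    simp only [mul_assoc] at h ⊢
    rw [h, misk, mis']
  · have h := congrArg (fun z => b⁻¹ * (z * a⁻¹)) hc.symm
    simp only [mul_assoc] at h ⊢
    rw [h, imik, imi']

theorem nle_refl (a : S) : nle a a := (mis' a).symm

theorem nle_antisymm {a b : S} (h1 : nle a b) (h2 : nle b a) : a = b := by
  have h1' : a = b * (a⁻¹ * a) := h1
  have h2' : b = a * (b⁻¹ * b) := h2
  have hc : (b⁻¹ * b) * (a⁻¹ * a) = (a⁻¹ * a) * (b⁻¹ * b) :=
    aux_idem_comm (aux_dd_idem b) (aux_dd_idem a)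
  calc a = b * (a⁻¹ * a) := h1'
    _ = (a * (b⁻¹ * b)) * (a⁻¹ * a) := by rw [← h2']
    _ = a * ((b⁻¹ * b) * (a⁻¹ * a)) := by simp only [mul_assoc]
    _ = a * ((a⁻¹ * a) * (b⁻¹ * b)) := by rw [hc]
    _ = (a * (a⁻¹ * a)) * (b⁻¹ * b) := by simp only [mul_assoc]
    _ = a * (b⁻¹ * b) := by rw [mis']
    _ = b := h2'.symm

theorem aux_inv_of_nle {a b : S} (h : nle a b) : a⁻¹ = (a⁻¹ * a) * b⁻¹ := by
  have h' : a = b * (a⁻¹ * a) := h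
  have h6 := congrArg (·⁻¹) h'
  rw [aux_mul_inv_rev, aux_idem_inv (aux_dd_idem a)] at h6
  exact h6

theorem aux_d_mono {a b : S} (h : nle a b) : (a⁻¹ * a) * (b⁻¹ * b) = a⁻¹ * a := by
  have h' : a = b * (a⁻¹ * a) := h
  have h5 : a⁻¹ * a = a⁻¹ * (b * (a⁻¹ * a)) := congrArg (a⁻¹ * ·) h'
  have h6 := aux_inv_of_nle h
  have dda : (a⁻¹ * a) * (a⁻¹ * a) = a⁻¹ * a := aux_dd_idem a
  have hc : (a⁻¹ * a) * (b⁻¹ * b) = (b⁻¹ * b) * (a⁻¹ * a) :=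
    aux_idem_comm (aux_dd_idem a) (aux_dd_idem b)
  have h7 : a⁻¹ * a = (a⁻¹ * a) * (b⁻¹ * b) * (a⁻¹ * a) := by
    calc a⁻¹ * a = a⁻¹ * (b * (a⁻¹ * a)) := h5
      _ = ((a⁻¹ * a) * b⁻¹) * (b * (a⁻¹ * a)) := by rw [← h6]
      _ = (a⁻¹ * a) * (b⁻¹ * b) * (a⁻¹ * a) := by simp only [mul_assoc]
  calc (a⁻¹ * a) * (b⁻¹ * b)
      = ((a⁻¹ * a) * (a⁻¹ * a)) * (b⁻¹ * b) := by rw [dda]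
    _ = (a⁻¹ * a) * ((a⁻¹ * a) * (b⁻¹ * b)) := by simp only [mul_assoc]
    _ = (a⁻¹ * a) * ((b⁻¹ * b) * (a⁻¹ * a)) := by rw [hc]
    _ = (a⁻¹ * a) * (b⁻¹ * b) * (a⁻¹ * a) := by simp only [mul_assoc]
    _ = a⁻¹ * a := h7.symm

theorem aux_inv_mul_of_nle {a s : S} (h : nle a s) : s⁻¹ * a = a⁻¹ * a := by
  have h' : a = s * (a⁻¹ * a) := h
  have h5 : s⁻¹ * a = s⁻¹ * (s * (a⁻¹ * a)) := congrArg (s⁻¹ * ·) h'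
  rw [h5, ← mul_assoc, aux_idem_comm (aux_dd_idem s) (aux_dd_idem a), aux_d_mono h]

theorem aux_inv_mul_eq {a b s : S} (ha : nle a s) (hb : nle b s) :
    a⁻¹ * b = (a⁻¹ * a) * (b⁻¹ * b) := by
  calc a⁻¹ * b = ((a⁻¹ * a) * s⁻¹) * b := by rw [← aux_inv_of_nle ha]
    _ = (a⁻¹ * a) * (s⁻¹ * b) := by simp only [mul_assoc]
    _ = (a⁻¹ * a) * (b⁻¹ * b) := by rw [aux_inv_mul_of_nle hb]

end AuxIS

section AuxZero
variable {S : Type*} [InverseSemigroupWithZero S]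

theorem aux_zero_inv : ((0 : S))⁻¹ = 0 :=
  (InverseSemigroup.inv_unique 0 0
    (by simp only [InverseSemigroupWithZero.mul_zero])
    (by simp only [InverseSemigroupWithZero.mul_zero])).symm

theorem nle_zero (a : S) : nle (0 : S) a := by
  show (0 : S) = a * ((0 : S)⁻¹ * 0)
  simp only [aux_zero_inv, InverseSemigroupWithZero.mul_zero]

theorem join_zero_left {z b : S} (h : isJoin z 0 b) : z = b := by
  have h' : nle (0 : S) z ∧ nle b z ∧ ∀ c, nle (0 : S) c → nle b c → nle z c := h
  exact nle_antisymm (h'.2.2 b (nle_zero b) (nle_refl b)) h'.2.1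

theorem join_zero_zero {z : S} (h : isJoin z 0 0) : z = 0 := join_zero_left h

theorem orth_d {a b s : S} (ha : nle a s) (hb : nle b s) (h : orth a b) :
    (a⁻¹ * a) * (b⁻¹ * b) = 0 := by
  rw [← aux_inv_mul_eq ha hb]
  exact h.1

end AuxZero

/-- In a Boolean inverse semigroup, `s ∖ (u ∨ v) = (s ∖ u) s⁻¹ (s ∖ v)` for `u, v ≤ s`. -/
theorem stmt7 {S : Type*} [BooleanInverseSemigroup S] (s u v w cu cv cw : S)
    (hus : nle u s) (hvs : nle v s) (hw : isJoin w u v)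
    (hcu : isDiff cu s u) (hcv : isDiff cv s v) (hcw : isDiff cw s w) :
    cw = cu * s⁻¹ * cv := by
  have hcu' : nle cu s ∧ orth cu u ∧ isJoin s u cu := hcu
  have hcv' : nle cv s ∧ orth cv v ∧ isJoin s v cv := hcv
  have hcw' : nle cw s ∧ orth cw w ∧ isJoin s w cw := hcw
  obtain ⟨hcu1, hcu2, hcu3⟩ := hcu'
  obtain ⟨hcv1, hcv2, hcv3⟩ := hcv'
  obtain ⟨hcw1, hcw2, hcw3⟩ := hcw'
  have hw' : nle u w ∧ nle v w ∧ ∀ c, nle u c → nle v c → nle w c := hw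
  have hcw3' : nle w s ∧ nle cw s ∧ ∀ c, nle w c → nle cw c → nle s c := hcw3
  have hws : nle w s := hcw3'.1
  -- idempotency facts
  have Iu : IsIdempotentElem (u⁻¹ * u) := aux_dd_idem u
  have Iv : IsIdempotentElem (v⁻¹ * v) := aux_dd_idem v
  have Iw : IsIdempotentElem (w⁻¹ * w) := aux_dd_idem w
  have I1 : IsIdempotentElem (cu⁻¹ * cu) := aux_dd_idem cu
  have I2 : IsIdempotentElem (cv⁻¹ * cv) := aux_dd_idem cv
  have I3 : IsIdempotentElem (cw⁻¹ * cw) := aux_dd_idem cw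
  have Ig : IsIdempotentElem ((cu⁻¹ * cu) * (cv⁻¹ * cv)) := aux_idem_mul I1 I2
  have Ig' : ((cu⁻¹ * cu) * (cv⁻¹ * cv)) * ((cu⁻¹ * cu) * (cv⁻¹ * cv))
      = (cu⁻¹ * cu) * (cv⁻¹ * cv) := Ig
  -- orthogonality on idempotents
  have F1 : (cu⁻¹ * cu) * (u⁻¹ * u) = 0 := orth_d hcu1 hus hcu2
  have F2 : (cv⁻¹ * cv) * (v⁻¹ * v) = 0 := orth_d hcv1 hvs hcv2
  have F6 : (cw⁻¹ * cw) * (w⁻¹ * w) = 0 := orth_d hcw1 hws hcw2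
  -- joins of idempotents
  have F3 : isJoin (s⁻¹ * s) (u⁻¹ * u) (cu⁻¹ * cu) := by
    have h := DistributiveInverseSemigroup.mul_join_left u cu s s⁻¹ hcu3
    rwa [aux_inv_mul_of_nle hus, aux_inv_mul_of_nle hcu1] at h
  have F4 : isJoin (s⁻¹ * s) (v⁻¹ * v) (cv⁻¹ * cv) := by
    have h := DistributiveInverseSemigroup.mul_join_left v cv s s⁻¹ hcv3
    rwa [aux_inv_mul_of_nle hvs, aux_inv_mul_of_nle hcv1] at h
  have F7 : isJoin (s⁻¹ * s) (w⁻¹ * w) (cw⁻¹ * cw) := by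
    have h := DistributiveInverseSemigroup.mul_join_left w cw s s⁻¹ hcw3
    rwa [aux_inv_mul_of_nle hws, aux_inv_mul_of_nle hcw1] at h
  have F5 : isJoin (w⁻¹ * w) (u⁻¹ * u) (v⁻¹ * v) := by
    have h := DistributiveInverseSemigroup.mul_join_left u v w s⁻¹ hw
    rwa [aux_inv_mul_of_nle hus, aux_inv_mul_of_nle hvs, aux_inv_mul_of_nle hws] at h
  have du_dw : (u⁻¹ * u) * (w⁻¹ * w) = u⁻¹ * u := aux_d_mono hw'.1
  have dv_dw : (v⁻¹ * v) * (w⁻¹ * w) = v⁻¹ * v := aux_d_mono hw'.2.1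
  have de1_ds : (cu⁻¹ * cu) * (s⁻¹ * s) = cu⁻¹ * cu := aux_d_mono hcu1
  have de2_ds : (cv⁻¹ * cv) * (s⁻¹ * s) = cv⁻¹ * cv := aux_d_mono hcv1
  have de3_ds : (cw⁻¹ * cw) * (s⁻¹ * s) = cw⁻¹ * cw := aux_d_mono hcw1
  -- e3 eu = 0, e3 ev = 0
  have h_e3eu : (cw⁻¹ * cw) * (u⁻¹ * u) = 0 := by
    calc (cw⁻¹ * cw) * (u⁻¹ * u)
        = (cw⁻¹ * cw) * ((u⁻¹ * u) * (w⁻¹ * w)) := by rw [du_dw]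
      _ = (cw⁻¹ * cw) * ((w⁻¹ * w) * (u⁻¹ * u)) := by rw [aux_idem_comm Iu Iw]
      _ = (cw⁻¹ * cw) * (w⁻¹ * w) * (u⁻¹ * u) := by simp only [mul_assoc]
      _ = 0 * (u⁻¹ * u) := by rw [F6]
      _ = 0 := InverseSemigroupWithZero.zero_mul _
  have h_e3ev : (cw⁻¹ * cw) * (v⁻¹ * v) = 0 := by
    calc (cw⁻¹ * cw) * (v⁻¹ * v)
        = (cw⁻¹ * cw) * ((v⁻¹ * v) * (w⁻¹ * w)) := by rw [dv_dw]
      _ = (cw⁻¹ * cw) * ((w⁻¹ * w) * (v⁻¹ * v)) := by rw [aux_idem_comm Iv Iw]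
      _ = (cw⁻¹ * cw) * (w⁻¹ * w) * (v⁻¹ * v) := by simp only [mul_assoc]
      _ = 0 * (v⁻¹ * v) := by rw [F6]
      _ = 0 := InverseSemigroupWithZero.zero_mul _
  -- e3 ≤ e1 and e3 ≤ e2
  have J1 := DistributiveInverseSemigroup.mul_join_left _ _ _ (cw⁻¹ * cw) F3
  rw [de3_ds, h_e3eu] at J1
  have h31 : cw⁻¹ * cw = (cw⁻¹ * cw) * (cu⁻¹ * cu) := join_zero_left J1
  have J2 := DistributiveInverseSemigroup.mul_join_left _ _ _ (cw⁻¹ * cw) F4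
  rw [de3_ds, h_e3ev] at J2
  have h32 : cw⁻¹ * cw = (cw⁻¹ * cw) * (cv⁻¹ * cv) := join_zero_left J2
  -- g := e1 e2 facts
  have hgeu : ((cu⁻¹ * cu) * (cv⁻¹ * cv)) * (u⁻¹ * u) = 0 := by
    calc ((cu⁻¹ * cu) * (cv⁻¹ * cv)) * (u⁻¹ * u)
        = (cu⁻¹ * cu) * ((cv⁻¹ * cv) * (u⁻¹ * u)) := by simp only [mul_assoc]
      _ = (cu⁻¹ * cu) * ((u⁻¹ * u) * (cv⁻¹ * cv)) := by rw [aux_idem_comm I2 Iu]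
      _ = (cu⁻¹ * cu) * (u⁻¹ * u) * (cv⁻¹ * cv) := by simp only [mul_assoc]
      _ = 0 * (cv⁻¹ * cv) := by rw [F1]
      _ = 0 := InverseSemigroupWithZero.zero_mul _
  have hgev : ((cu⁻¹ * cu) * (cv⁻¹ * cv)) * (v⁻¹ * v) = 0 := by
    calc ((cu⁻¹ * cu) * (cv⁻¹ * cv)) * (v⁻¹ * v)
        = (cu⁻¹ * cu) * ((cv⁻¹ * cv) * (v⁻¹ * v)) := by simp only [mul_assoc]
      _ = (cu⁻¹ * cu) * 0 := by rw [F2]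
      _ = 0 := InverseSemigroupWithZero.mul_zero _
  have J3 := DistributiveInverseSemigroup.mul_join_left _ _ _ ((cu⁻¹ * cu) * (cv⁻¹ * cv)) F5
  rw [hgeu, hgev] at J3
  have hgew : ((cu⁻¹ * cu) * (cv⁻¹ * cv)) * (w⁻¹ * w) = 0 := join_zero_zero J3
  have hgds : ((cu⁻¹ * cu) * (cv⁻¹ * cv)) * (s⁻¹ * s) = (cu⁻¹ * cu) * (cv⁻¹ * cv) := by
    calc ((cu⁻¹ * cu) * (cv⁻¹ * cv)) * (s⁻¹ * s)
        = (cu⁻¹ * cu) * ((cv⁻¹ * cv) * (s⁻¹ * s)) := by simp only [mul_assoc]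
      _ = (cu⁻¹ * cu) * (cv⁻¹ * cv) := by rw [de2_ds]
  have J4 := DistributiveInverseSemigroup.mul_join_left _ _ _ ((cu⁻¹ * cu) * (cv⁻¹ * cv)) F7
  rw [hgds, hgew] at J4
  have hge3 : (cu⁻¹ * cu) * (cv⁻¹ * cv)
      = ((cu⁻¹ * cu) * (cv⁻¹ * cv)) * (cw⁻¹ * cw) := join_zero_left J4
  -- the element x = cu s⁻¹ cv
  have hcu1' : cu = s * (cu⁻¹ * cu) := hcu1
  have hcw1' : cw = s * (cw⁻¹ * cw) := hcw1
  have hx : cu * s⁻¹ * cv = s * ((cu⁻¹ * cu) * (cv⁻¹ * cv)) := by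
    calc cu * s⁻¹ * cv = cu * (s⁻¹ * cv) := by simp only [mul_assoc]
      _ = cu * (cv⁻¹ * cv) := by rw [aux_inv_mul_of_nle hcv1]
      _ = (s * (cu⁻¹ * cu)) * (cv⁻¹ * cv) := by rw [← hcu1']
      _ = s * ((cu⁻¹ * cu) * (cv⁻¹ * cv)) := by simp only [mul_assoc]
  have hdx : (cu * s⁻¹ * cv)⁻¹ * (cu * s⁻¹ * cv) = (cu⁻¹ * cu) * (cv⁻¹ * cv) := by
    rw [hx, aux_mul_inv_rev, aux_idem_inv Ig]
    calc ((cu⁻¹ * cu) * (cv⁻¹ * cv)) * s⁻¹ * (s * ((cu⁻¹ * cu) * (cv⁻¹ * cv)))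
        = ((cu⁻¹ * cu) * (cv⁻¹ * cv)) * (s⁻¹ * s) * ((cu⁻¹ * cu) * (cv⁻¹ * cv)) := by
          simp only [mul_assoc]
      _ = ((cu⁻¹ * cu) * (cv⁻¹ * cv)) * ((cu⁻¹ * cu) * (cv⁻¹ * cv)) := by rw [hgds]
      _ = (cu⁻¹ * cu) * (cv⁻¹ * cv) := Ig'
  have he3g : (cw⁻¹ * cw) * ((cu⁻¹ * cu) * (cv⁻¹ * cv)) = cw⁻¹ * cw := by
    calc (cw⁻¹ * cw) * ((cu⁻¹ * cu) * (cv⁻¹ * cv))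
        = ((cw⁻¹ * cw) * (cu⁻¹ * cu)) * (cv⁻¹ * cv) := by simp only [mul_assoc]
      _ = (cw⁻¹ * cw) * (cv⁻¹ * cv) := by rw [← h31]
      _ = cw⁻¹ * cw := by rw [← h32]
  have hx_cw : nle (cu * s⁻¹ * cv) cw := by
    show cu * s⁻¹ * cv = cw * ((cu * s⁻¹ * cv)⁻¹ * (cu * s⁻¹ * cv))
    rw [hdx]
    calc cu * s⁻¹ * cv = s * ((cu⁻¹ * cu) * (cv⁻¹ * cv)) := hx
      _ = s * (((cu⁻¹ * cu) * (cv⁻¹ * cv)) * (cw⁻¹ * cw)) := by rw [← hge3]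
      _ = s * ((cw⁻¹ * cw) * ((cu⁻¹ * cu) * (cv⁻¹ * cv))) := by rw [aux_idem_comm Ig I3]
      _ = (s * (cw⁻¹ * cw)) * ((cu⁻¹ * cu) * (cv⁻¹ * cv)) := (mul_assoc _ _ _).symm
      _ = cw * ((cu⁻¹ * cu) * (cv⁻¹ * cv)) := by rw [← hcw1']
  have hcw_x : nle cw (cu * s⁻¹ * cv) := by
    show cw = (cu * s⁻¹ * cv) * (cw⁻¹ * cw)
    calc cw = s * (cw⁻¹ * cw) := hcw1'
      _ = s * ((cw⁻¹ * cw) * ((cu⁻¹ * cu) * (cv⁻¹ * cv))) := by rw [he3g]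
      _ = s * (((cu⁻¹ * cu) * (cv⁻¹ * cv)) * (cw⁻¹ * cw)) := by rw [aux_idem_comm I3 Ig]
      _ = (s * ((cu⁻¹ * cu) * (cv⁻¹ * cv))) * (cw⁻¹ * cw) := (mul_assoc _ _ _).symm
      _ = (cu * s⁻¹ * cv) * (cw⁻¹ * cw) := by rw [← hx]
  exact nle_antisymm hcw_x hx_cw
end

section
/- Let D be a distributive lattice with bottom and let e, f, i, j ∈ D with f < e and j < i. Then every prime filter containing e and omitting f also contains i and omits j, if and only if e = f ∨ (e ∧ i) and f ∧ j = e ∧ j. -/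
/-- A prime filter in a lattice with bottom: a nonempty, proper (does not contain ⊥),
upward-closed, meet-closed subset `P` such that `a ⊔ b ∈ P` implies `a ∈ P` or `b ∈ P`. -/
def IsPrimeFilter {D : Type*} [Lattice D] [OrderBot D] (P : Set D) : Prop :=
  P.Nonempty ∧ (⊥ : D) ∉ P ∧ (∀ a ∈ P, ∀ b : D, a ≤ b → b ∈ P) ∧
    (∀ a ∈ P, ∀ b ∈ P, a ⊓ b ∈ P) ∧ ∀ a b : D, a ⊔ b ∈ P → a ∈ P ∨ b ∈ P

/-- Separation: if `a ≤ b` fails, there is a prime filter containing `a` but not `b`. -/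
lemma exists_primeFilter {D : Type*} [DistribLattice D] [OrderBot D] {a b : D}
    (h : ¬ a ≤ b) : ∃ P : Set D, IsPrimeFilter P ∧ a ∈ P ∧ b ∉ P := by
  -- work in `WithTop D`, which is a bounded distributive lattice
  set F : Order.PFilter (WithTop D) := Order.PFilter.principal (↑a)
  set I : Order.Ideal (WithTop D) := Order.Ideal.principal (↑b)
  have hdisj : Disjoint (F : Set (WithTop D)) (I : Set (WithTop D)) := by
    rw [Set.disjoint_left]
    intro x hxF hxI
    exact h (WithTop.coe_le_coe.mp (le_trans (Order.PFilter.mem_principal.mp hxF)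
      (Order.Ideal.mem_principal.mp hxI)))
  obtain ⟨J, hJprime, hIJ, hJdisj⟩ :=
    DistribLattice.prime_ideal_of_disjoint_filter_ideal hdisj
  refine ⟨{x : D | (↑x : WithTop D) ∉ J}, ⟨⟨a, ?_⟩, ?_, ?_, ?_, ?_⟩, ?_, ?_⟩
  · exact Set.disjoint_left.mp hJdisj (Order.PFilter.mem_principal.mpr le_rfl)
  · -- ⊥ ∉ P
    intro hbot
    exact hbot (J.lower (by exact_mod_cast bot_le : ((⊥ : D) : WithTop D) ≤ ↑b)
      (hIJ Order.Ideal.mem_principal_self))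
  · -- upward closed
    intro x hx y hxy hyJ
    exact hx (J.lower (WithTop.coe_le_coe.mpr hxy) hyJ)
  · -- closed under meets
    intro x hx y hy hxy
    rw [show ((↑(x ⊓ y) : WithTop D)) = ↑x ⊓ ↑y from WithTop.coe_inf x y] at hxy
    exact (hJprime.mem_or_mem hxy).elim hx hy
  · -- prime
    intro x y hxy
    by_contra hc
    push_neg at hc
    simp only [Set.mem_setOf_eq, not_not] at hc hxy
    exact hxy (by rw [WithTop.coe_sup]; exact J.sup_mem hc.1 hc.2)
  · exact Set.disjoint_left.mp hJdisj (Order.PFilter.mem_principal.mpr le_rfl)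
  · simp only [Set.mem_setOf_eq, not_not]
    exact hIJ Order.Ideal.mem_principal_self

/-- In a distributive lattice with bottom, for `f < e` and `j < i`: every prime filter
containing `e` and omitting `f` contains `i` and omits `j`, iff
`e = f ⊔ (e ⊓ i)` and `f ⊓ j = e ⊓ j`. -/
theorem stmt9 {D : Type*} [DistribLattice D] [OrderBot D] (e f i j : D)
    (hfe : f < e) (hji : j < i) :
    (∀ P : Set D, IsPrimeFilter P → e ∈ P → f ∉ P → i ∈ P ∧ j ∉ P) ↔
      (e = f ⊔ (e ⊓ i) ∧ f ⊓ j = e ⊓ j) := by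
  constructor
  · intro H
    constructor
    · -- e = f ⊔ (e ⊓ i)
      by_contra hne
      have hle : f ⊔ (e ⊓ i) ≤ e := sup_le hfe.le inf_le_left
      have hnle : ¬ e ≤ f ⊔ (e ⊓ i) := fun h => hne (le_antisymm h hle)
      obtain ⟨P, hP, heP, hbP⟩ := exists_primeFilter hnle
      obtain ⟨_, _, hup, hmeet, _⟩ := hP
      have hfP : f ∉ P := fun hf => hbP (hup f hf _ le_sup_left)
      obtain ⟨hiP, _⟩ := H P ⟨‹_›, ‹_›, hup, hmeet, ‹_›⟩ heP hfP
      exact hbP (hup _ (hmeet e heP i hiP) _ le_sup_right)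
    · -- f ⊓ j = e ⊓ j
      by_contra hne
      have hle : f ⊓ j ≤ e ⊓ j := inf_le_inf_right j hfe.le
      have hnle : ¬ e ⊓ j ≤ f := by
        intro h
        exact hne (le_antisymm hle (le_inf h inf_le_right))
      obtain ⟨P, hP, haP, hfP⟩ := exists_primeFilter hnle
      obtain ⟨_, _, hup, hmeet, _⟩ := hP
      have heP : e ∈ P := hup _ haP e inf_le_left
      have hjP : j ∈ P := hup _ haP j inf_le_right
      exact (H P ⟨‹_›, ‹_›, hup, hmeet, ‹_›⟩ heP hfP).2 hjP
  · rintro ⟨h1, h2⟩ P ⟨_, _, hup, hmeet, hprime⟩ heP hfP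
    have hiP : i ∈ P := by
      rw [h1] at heP
      rcases hprime f (e ⊓ i) heP with hf | hei
      · exact absurd hf hfP
      · exact hup _ hei i inf_le_right
    refine ⟨hiP, fun hjP => ?_⟩
    have : e ⊓ j ∈ P := hmeet e heP j hjP
    rw [← h2] at this
    exact hfP (hup _ this f inf_le_left)
end

section
/- Let R be a unital ring and S ⊆ R an inverse submonoid of the multiplicative monoid of R containing 0, satisfying: if a, b ∈ S are orthogonal (a⁻¹b = ab⁻¹ = 0) then a+b ∈ S, and if e ∈ S is idempotent then 1−e ∈ S. Then for orthogonal a, b ∈ S, the join a ∨ b in the natural partial order of S exists and equals a + b. -/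
/-- Uniqueness of inverses in an inverse subsemigroup (idempotents commute). -/
private lemma inv_unique13 {R : Type*} [Ring R] (S : Set R)
    (hmul : ∀ a ∈ S, ∀ b ∈ S, a * b ∈ S)
    (hcomm : ∀ e ∈ S, ∀ f ∈ S, e * e = e → f * f = f → e * f = f * e)
    {a x y : R} (haS : a ∈ S) (hxS : x ∈ S) (hyS : y ∈ S)
    (hx1 : a * x * a = a) (hx2 : x * a * x = x)
    (hy1 : a * y * a = a) (hy2 : y * a * y = y) : x = y := by
  have hxa : (x * a) * (x * a) = x * a := by
    calc (x * a) * (x * a) = (x * a * x) * a := by noncomm_ring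
    _ = x * a := by rw [hx2]
  have hya : (y * a) * (y * a) = y * a := by
    calc (y * a) * (y * a) = (y * a * y) * a := by noncomm_ring
    _ = y * a := by rw [hy2]
  have hax : (a * x) * (a * x) = a * x := by
    calc (a * x) * (a * x) = (a * x * a) * x := by noncomm_ring
    _ = a * x := by rw [hx1]
  have hay : (a * y) * (a * y) = a * y := by
    calc (a * y) * (a * y) = (a * y * a) * y := by noncomm_ring
    _ = a * y := by rw [hy1]
  have c1 : (x * a) * (y * a) = (y * a) * (x * a) :=
    hcomm _ (hmul x hxS a haS) _ (hmul y hyS a haS) hxa hya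
  have c2 : (a * x) * (a * y) = (a * y) * (a * x) :=
    hcomm _ (hmul a haS x hxS) _ (hmul a haS y hyS) hax hay
  have e1 : x = x * a * y := by
    calc x = x * a * x := hx2.symm
    _ = x * (a * y * a) * x := by rw [hy1]
    _ = x * ((a * y) * (a * x)) := by noncomm_ring
    _ = x * ((a * x) * (a * y)) := by rw [c2]
    _ = (x * a * x) * (a * y) := by noncomm_ring
    _ = x * (a * y) := by rw [hx2]
    _ = x * a * y := by noncomm_ring
  have e2 : y = x * a * y := by
    calc y = y * a * y := hy2.symm
    _ = y * (a * x * a) * y := by rw [hx1]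
    _ = ((y * a) * (x * a)) * y := by noncomm_ring
    _ = ((x * a) * (y * a)) * y := by rw [c1]
    _ = (x * a) * (y * a * y) := by noncomm_ring
    _ = (x * a) * y := by rw [hy2]
    _ = x * a * y := by noncomm_ring
  exact e1.trans e2.symm

/-- If `t = c * e` with `e` idempotent, then `c * (t' * t) = t`. -/
private lemma le_imp13 {R : Type*} [Ring R] (S : Set R)
    (hmul : ∀ a ∈ S, ∀ b ∈ S, a * b ∈ S)
    (hcomm : ∀ e ∈ S, ∀ f ∈ S, e * e = e → f * f = f → e * f = f * e)
    {c c' t t' e : R} (hcS : c ∈ S) (hc'S : c' ∈ S) (htS : t ∈ S) (ht'S : t' ∈ S)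
    (heS : e ∈ S)
    (hc1 : c * c' * c = c) (hc2 : c' * c * c' = c')
    (ht1 : t * t' * t = t) (ht2 : t' * t * t' = t')
    (hee : e * e = e) (hte : t = c * e) : c * (t' * t) = t := by
  have hc'c : (c' * c) * (c' * c) = c' * c := by
    calc (c' * c) * (c' * c) = (c' * c * c') * c := by noncomm_ring
    _ = c' * c := by rw [hc2]
  have ce : e * (c' * c) = (c' * c) * e :=
    hcomm _ heS _ (hmul c' hc'S c hcS) hee hc'c
  have hx1 : t * (e * c') * t = t := by
    calc t * (e * c') * t = (c * e) * (e * c') * (c * e) := by rw [hte]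
    _ = c * ((e * e) * (c' * c)) * e := by noncomm_ring
    _ = c * (e * (c' * c)) * e := by rw [hee]
    _ = c * ((c' * c) * e) * e := by rw [ce]
    _ = (c * c' * c) * (e * e) := by noncomm_ring
    _ = c * e := by rw [hc1, hee]
    _ = t := hte.symm
  have hx2 : (e * c') * t * (e * c') = e * c' := by
    calc (e * c') * t * (e * c') = (e * c') * (c * e) * (e * c') := by rw [hte]
    _ = e * ((c' * c) * (e * e)) * c' := by noncomm_ring
    _ = e * ((c' * c) * e) * c' := by rw [hee]
    _ = e * (e * (c' * c)) * c' := by rw [ce]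
    _ = (e * e) * (c' * c * c') := by noncomm_ring
    _ = e * c' := by rw [hee, hc2]
  have huniq : t' = e * c' :=
    inv_unique13 S hmul hcomm htS ht'S (hmul e heS c' hc'S) ht1 ht2 hx1 hx2
  calc c * (t' * t) = c * ((e * c') * (c * e)) := by rw [huniq, hte]
  _ = c * (e * (c' * c)) * e := by noncomm_ring
  _ = c * ((c' * c) * e) * e := by rw [ce]
  _ = (c * c' * c) * (e * e) := by noncomm_ring
  _ = c * e := by rw [hc1, hee]
  _ = t := hte.symm

/-- Let `S` be an inverse submonoid with zero of the multiplicative monoid of a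
unital ring `R`, closed under sums of orthogonal pairs and under `e ↦ 1 - e` for
idempotents. For orthogonal `a, b ∈ S` (with inverses `a', b'` in `S`, and
`a' b = a b' = 0`), the join `a ∨ b` in the natural partial order of `S`
(`x ≤ y` iff `x = y e` for some idempotent `e ∈ S`) exists and equals `a + b`. -/
theorem stmt13 {R : Type*} [Ring R] (S : Set R)
    (h0 : (0 : R) ∈ S) (h1 : (1 : R) ∈ S)
    (hmul : ∀ a ∈ S, ∀ b ∈ S, a * b ∈ S)
    (hreg : ∀ a ∈ S, ∃ b ∈ S, a * b * a = a ∧ b * a * b = b)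
    (hcomm : ∀ e ∈ S, ∀ f ∈ S, e * e = e → f * f = f → e * f = f * e)
    (hadd : ∀ a ∈ S, ∀ b ∈ S, ∀ a' ∈ S, ∀ b' ∈ S,
      a * a' * a = a → a' * a * a' = a' → b * b' * b = b → b' * b * b' = b' →
      a' * b = 0 → a * b' = 0 → a + b ∈ S)
    (hcompl : ∀ e ∈ S, e * e = e → 1 - e ∈ S)
    (a b a' b' : R) (haS : a ∈ S) (hbS : b ∈ S) (ha'S : a' ∈ S) (hb'S : b' ∈ S)
    (ha' : a * a' * a = a ∧ a' * a * a' = a')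
    (hb' : b * b' * b = b ∧ b' * b * b' = b')
    (horth : a' * b = 0 ∧ a * b' = 0) :
    a + b ∈ S ∧
    (∃ e ∈ S, e * e = e ∧ a = (a + b) * e) ∧
    (∃ e ∈ S, e * e = e ∧ b = (a + b) * e) ∧
    ∀ c ∈ S, (∃ e ∈ S, e * e = e ∧ a = c * e) → (∃ e ∈ S, e * e = e ∧ b = c * e) →
      (∃ e ∈ S, e * e = e ∧ a + b = c * e) := by
  obtain ⟨ha1, ha2⟩ := ha'
  obtain ⟨hb1, hb2⟩ := hb'
  obtain ⟨ho1, ho2⟩ := horth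
  -- idempotents
  have ia : (a' * a) * (a' * a) = a' * a := by
    calc (a' * a) * (a' * a) = a' * (a * a' * a) := by noncomm_ring
    _ = a' * a := by rw [ha1]
  have ib : (b' * b) * (b' * b) = b' * b := by
    calc (b' * b) * (b' * b) = b' * (b * b' * b) := by noncomm_ring
    _ = b' * b := by rw [hb1]
  have ia2 : (a * a') * (a * a') = a * a' := by
    calc (a * a') * (a * a') = (a * a' * a) * a' := by noncomm_ring
    _ = a * a' := by rw [ha1]
  have ib2 : (b * b') * (b * b') = b * b' := by
    calc (b * b') * (b * b') = (b * b' * b) * b' := by noncomm_ring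
    _ = b * b' := by rw [hb1]
  have c1 : (a' * a) * (b' * b) = (b' * b) * (a' * a) :=
    hcomm _ (hmul a' ha'S a haS) _ (hmul b' hb'S b hbS) ia ib
  have c2 : (a * a') * (b * b') = (b * b') * (a * a') :=
    hcomm _ (hmul a haS a' ha'S) _ (hmul b hbS b' hb'S) ia2 ib2
  -- the other two orthogonality relations
  have hba' : b * a' = 0 := by
    calc b * a' = (b * b' * b) * (a' * a * a') := by rw [hb1, ha2]
    _ = b * ((b' * b) * (a' * a)) * a' := by noncomm_ring
    _ = b * ((a' * a) * (b' * b)) * a' := by rw [c1]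
    _ = (b * a') * ((a * b') * (b * a')) := by noncomm_ring
    _ = 0 := by rw [ho2]; simp
  have hb'a : b' * a = 0 := by
    calc b' * a = (b' * b * b') * (a * a' * a) := by rw [hb2, ha1]
    _ = b' * ((b * b') * (a * a')) * a := by noncomm_ring
    _ = b' * ((a * a') * (b * b')) * a := by rw [c2]
    _ = (b' * a) * ((a' * b) * (b' * a)) := by noncomm_ring
    _ = 0 := by rw [ho1]; simp
  have oab : (a' * a) * (b' * b) = 0 := by
    calc (a' * a) * (b' * b) = a' * (a * b') * b := by noncomm_ring
    _ = 0 := by rw [ho2]; simp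
  have oba : (b' * b) * (a' * a) = 0 := by
    calc (b' * b) * (a' * a) = b' * (b * a') * a := by noncomm_ring
    _ = 0 := by rw [hba']; simp
  have habS : a + b ∈ S := hadd a haS b hbS a' ha'S b' hb'S ha1 ha2 hb1 hb2 ho1 ho2
  refine ⟨habS, ⟨a' * a, hmul a' ha'S a haS, ia, ?_⟩,
    ⟨b' * b, hmul b' hb'S b hbS, ib, ?_⟩, ?_⟩
  · calc a = a * a' * a + (b * a') * a := by rw [ha1, hba']; simp
    _ = (a + b) * (a' * a) := by noncomm_ring
  · calc b = (a * b') * b + b * b' * b := by rw [ho2, hb1]; simp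
    _ = (a + b) * (b' * b) := by noncomm_ring
  · rintro c hcS ⟨e, heS, hee, hae⟩ ⟨f, hfS, hff, hbf⟩
    obtain ⟨c', hc'S, hc1, hc2⟩ := hreg c hcS
    have hca : c * (a' * a) = a :=
      le_imp13 S hmul hcomm hcS hc'S haS ha'S heS hc1 hc2 ha1 ha2 hee hae
    have hcb : c * (b' * b) = b :=
      le_imp13 S hmul hcomm hcS hc'S hbS hb'S hfS hc1 hc2 hb1 hb2 hff hbf
    have iaa : (a' * a) * (a' * a) * (a' * a) = a' * a := by rw [ia, ia]
    have ibb : (b' * b) * (b' * b) * (b' * b) = b' * b := by rw [ib, ib]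
    refine ⟨a' * a + b' * b,
      hadd _ (hmul a' ha'S a haS) _ (hmul b' hb'S b hbS) _ (hmul a' ha'S a haS)
        _ (hmul b' hb'S b hbS) iaa iaa ibb ibb oab oab, ?_, ?_⟩
    · calc (a' * a + b' * b) * (a' * a + b' * b)
          = (a' * a) * (a' * a) + (a' * a) * (b' * b)
            + ((b' * b) * (a' * a) + (b' * b) * (b' * b)) := by noncomm_ring
      _ = a' * a + b' * b := by rw [ia, ib, oab, oba]; abel
    · calc a + b = c * (a' * a) + c * (b' * b) := by rw [hca, hcb]
      _ = c * (a' * a + b' * b) := by rw [mul_add]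
end

section
/- Let A be a finite alphabet with at least 2 letters. A finitely generated right ideal R = PA* of A* (P a finite prefix code) is essential (meets every nonempty right ideal) if and only if its complement A* ∖ R is finite. -/
/-- Over a finite alphabet with at least 2 letters, a finitely generated right
ideal `R = P A*` of the free monoid (`P` a finite prefix code) is essential
(meets every nonempty right ideal) iff its complement is finite. -/
theorem stmt16 {A : Type*} [Fintype A] (hA : 2 ≤ Fintype.card A)
    (P : Finset (List A))
    (hP : ∀ p ∈ P, ∀ q ∈ P, p ≠ q → ¬ p <+: q)
    (R : Set (List A)) (hR : R = {x : List A | ∃ p ∈ P, p <+: x}) :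
    (∀ R' : Set (List A), R'.Nonempty → (∀ x ∈ R', ∀ w : List A, x ++ w ∈ R') →
      (R ∩ R').Nonempty) ↔ Rᶜ.Finite := by
  constructor
  · intro h
    have hsub : Rᶜ ⊆ ⋃ p ∈ (P : Set (List A)), {y | y <+: p} := by
      intro x hx
      obtain ⟨z, hzR, hzx⟩ := h {y | x <+: y} ⟨x, List.prefix_refl x⟩
        (fun y hy w => hy.trans (List.prefix_append y w))
      rw [hR] at hzR
      obtain ⟨p, hpP, hpz⟩ := hzR
      rcases List.prefix_or_prefix_of_prefix hpz hzx with hpx | hxp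
      · exact absurd (hR ▸ ⟨p, hpP, hpx⟩) hx
      · exact Set.mem_biUnion hpP hxp
    refine Set.Finite.subset (Set.Finite.biUnion P.finite_toSet (fun p _ => ?_)) hsub
    refine Set.Finite.subset (List.finite_toSet p.inits) (fun y hy => ?_)
    simpa [List.mem_inits] using hy
  · intro hfin R' ⟨x, hx⟩ hclosed
    obtain ⟨N, hN⟩ := (hfin.image List.length).bddAbove
    obtain ⟨a⟩ := Fintype.card_pos_iff.mp (lt_of_lt_of_le (by norm_num) hA)
    refine ⟨x ++ List.replicate (N + 1) a, ?_, hclosed x hx _⟩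
    by_contra hc
    have : (x ++ List.replicate (N + 1) a).length ≤ N :=
      hN (Set.mem_image_of_mem List.length hc)
    simp [List.length_append] at this
    omega
end

section
/- Let A be a finite alphabet. The Boolean subalgebra of the power set of A* generated by the finitely generated right ideals of A* is exactly the collection of definite languages, i.e., languages of the form X ∪ YA* where X and Y are finite subsets of A*. -/
/-- The Boolean subalgebra of the power set of `A*` generated by the finitely
generated right ideals: the smallest collection containing them, closed under
complements, finite unions and finite intersections. -/
inductive GenBool {A : Type*} : Set (List A) → Prop
  | ideal (Y : Finset (List A)) : GenBool {x : List A | ∃ y ∈ Y, y <+: x}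
  | compl {L : Set (List A)} : GenBool L → GenBool Lᶜ
  | union {L M : Set (List A)} : GenBool L → GenBool M → GenBool (L ∪ M)
  | inter {L M : Set (List A)} : GenBool L → GenBool M → GenBool (L ∩ M)

/-- A language is `n`-definite: membership of sufficiently long words depends
only on the first `n` letters. -/
def DefB {A : Type*} (L : Set (List A)) : Prop :=
  ∃ n : ℕ, ∀ x y : List A, n ≤ x.length → n ≤ y.length →
    x.take n = y.take n → (x ∈ L ↔ y ∈ L)

lemma prefix_iff_prefix_take {A : Type*} {y x : List A} {n : ℕ}
    (hy : y.length ≤ n) : y <+: x ↔ x.take n = y ++ (x.take n).drop y.length := by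
  constructor
  · intro h
    have h1 : x.take y.length = y := (List.prefix_iff_eq_take.mp h).symm
    have : (x.take n).take y.length = y := by
      rw [List.take_take, min_eq_left hy, h1]
    conv_lhs => rw [← List.take_append_drop y.length (x.take n), this]
  · intro h
    have : y <+: x.take n := ⟨(x.take n).drop y.length, h.symm⟩
    exact this.trans (List.take_prefix n x)

lemma prefix_congr_take {A : Type*} {y x x' : List A} {n : ℕ}
    (hy : y.length ≤ n) (hxx : x.take n = x'.take n) :
    y <+: x ↔ y <+: x' := by
  rw [prefix_iff_prefix_take hy, prefix_iff_prefix_take hy, hxx]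

lemma genBool_defB {A : Type*} {L : Set (List A)} (h : GenBool L) : DefB L := by
  induction h with
  | ideal Y =>
      refine ⟨Y.sup List.length, fun x y hx hy hxy => ?_⟩
      simp only [Set.mem_setOf_eq]
      constructor
      · rintro ⟨z, hz, hzx⟩
        exact ⟨z, hz, (prefix_congr_take (Finset.le_sup hz) hxy).mp hzx⟩
      · rintro ⟨z, hz, hzx⟩
        exact ⟨z, hz, (prefix_congr_take (Finset.le_sup hz) hxy).mpr hzx⟩
  | compl _ ih =>
      obtain ⟨n, hn⟩ := ih
      exact ⟨n, fun x y hx hy hxy => not_congr (hn x y hx hy hxy)⟩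
  | union _ _ ihL ihM =>
      obtain ⟨n, hn⟩ := ihL; obtain ⟨m, hm⟩ := ihM
      refine ⟨max n m, fun x y hx hy hxy => ?_⟩
      have h1 : x.take n = y.take n := by
        have := congrArg (List.take n) hxy
        simpa [List.take_take, min_eq_left (le_max_left n m)] using this
      have h2 : x.take m = y.take m := by
        have := congrArg (List.take m) hxy
        simpa [List.take_take, min_eq_left (le_max_right n m)] using this
      exact or_congr
        (hn x y (le_trans (le_max_left n m) hx) (le_trans (le_max_left n m) hy) h1)
        (hm x y (le_trans (le_max_right n m) hx) (le_trans (le_max_right n m) hy) h2)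
  | inter _ _ ihL ihM =>
      obtain ⟨n, hn⟩ := ihL; obtain ⟨m, hm⟩ := ihM
      refine ⟨max n m, fun x y hx hy hxy => ?_⟩
      have h1 : x.take n = y.take n := by
        have := congrArg (List.take n) hxy
        simpa [List.take_take, min_eq_left (le_max_left n m)] using this
      have h2 : x.take m = y.take m := by
        have := congrArg (List.take m) hxy
        simpa [List.take_take, min_eq_left (le_max_right n m)] using this
      exact and_congr
        (hn x y (le_trans (le_max_left n m) hx) (le_trans (le_max_left n m) hy) h1)
        (hm x y (le_trans (le_max_right n m) hx) (le_trans (le_max_right n m) hy) h2)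

lemma genBool_empty {A : Type*} : GenBool (∅ : Set (List A)) := by
  have := GenBool.ideal (A := A) ∅
  simpa using this

lemma genBool_singleton {A : Type*} [Fintype A] (x : List A) :
    GenBool ({x} : Set (List A)) := by
  classical
  have h1 := GenBool.ideal {x}
  have h2 := GenBool.ideal (Finset.image (fun a : A => x ++ [a]) Finset.univ)
  have h := GenBool.inter h1 (GenBool.compl h2)
  convert h using 1
  ext w
  simp only [Set.mem_singleton_iff, Set.mem_inter_iff, Set.mem_compl_iff,
    Set.mem_setOf_eq, Finset.mem_singleton, Finset.mem_image, Finset.mem_univ,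
    true_and]
  constructor
  · rintro rfl
    refine ⟨⟨w, rfl, List.prefix_refl w⟩, ?_⟩
    rintro ⟨z, ⟨a, rfl⟩, hz⟩
    have := hz.length_le
    simp at this
  · rintro ⟨⟨z, rfl, hz⟩, hne⟩
    obtain ⟨t, rfl⟩ := hz
    cases t with
    | nil => simp
    | cons a t =>
        exact absurd ⟨z ++ [a], ⟨a, rfl⟩, ⟨t, by simp⟩⟩ hne

lemma genBool_finset {A : Type*} [Fintype A] (X : Finset (List A)) :
    GenBool ((↑X : Set (List A))) := by
  classical
  induction X using Finset.induction with
  | empty => simpa using genBool_empty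
  | @insert a s _ ih =>
      have := GenBool.union (genBool_singleton a) ih
      convert this using 1
      rw [Finset.coe_insert, Set.insert_eq]

lemma defB_genBool {A : Type*} [Fintype A] {L : Set (List A)} (h : DefB L) :
    ∃ X Y : Finset (List A),
      L = (↑X : Set (List A)) ∪ {x : List A | ∃ y ∈ Y, y <+: x} := by
  classical
  obtain ⟨n, hn⟩ := h
  have hXfin : (L ∩ {w : List A | w.length < n}).Finite :=
    (List.finite_length_lt A n).subset (Set.inter_subset_right)
  have hYfin : (L ∩ {w : List A | w.length = n}).Finite :=
    (List.finite_length_eq A n).subset (Set.inter_subset_right)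
  refine ⟨hXfin.toFinset, hYfin.toFinset, ?_⟩
  ext x
  simp only [Set.mem_union, Set.mem_setOf_eq, Set.Finite.mem_toFinset,
    Set.Finite.coe_toFinset, Set.mem_inter_iff]
  constructor
  · intro hx
    rcases lt_or_ge x.length n with hlen | hlen
    · exact Or.inl ⟨hx, hlen⟩
    · refine Or.inr ⟨x.take n, ⟨?_, by simp [hlen]⟩, List.take_prefix n x⟩
      exact (hn x (x.take n) hlen (by simp [hlen])
        (by rw [List.take_take, min_self])).mp hx
  · rintro (⟨hx, _⟩ | ⟨y, ⟨hyL, hylen⟩, hyx⟩)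
    · exact hx
    · have hxlen : n ≤ x.length := hylen ▸ hyx.length_le
      have htake : x.take n = y := by
        have := (List.prefix_iff_eq_take.mp hyx).symm
        rwa [hylen] at this
      exact (hn x y hxlen (le_of_eq hylen.symm)
        (by rw [htake, List.take_of_length_le (le_of_eq hylen)])).mpr hyL

/-- For a finite alphabet `A`, the Boolean subalgebra of the power set of `A*`
generated by the finitely generated right ideals is exactly the collection of
(reverse) definite languages `X ∪ Y A*` with `X, Y` finite. -/
theorem stmt17 {A : Type*} [Fintype A] (L : Set (List A)) :
    GenBool L ↔ ∃ X Y : Finset (List A),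
      L = (↑X : Set (List A)) ∪ {x : List A | ∃ y ∈ Y, y <+: x} := by
  constructor
  · intro h
    exact defB_genBool (genBool_defB h)
  · rintro ⟨X, Y, rfl⟩
    exact GenBool.union (genBool_finset X) (GenBool.ideal Y)
end
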